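/- Let $a : (-\infty, t_{\max}) \to \mathbb{R}_{>0}$ be twice differentiable and suppose $H(t) = \dot a(t)/a(t) \to H_\Lambda$ and $\dot H(t) \to c$ as $t \to -\infty$, where $H_\Lambda > 0$ and $c \in \mathbb{R}$. Then $c = 0$. -/

import Mathlib

open Real Filter

/-- If a function tends to a finite limit at `-∞`, is differentiable near `-∞`,
and its derivative tends to `d` at `-∞`, then `d = 0`. -/
lemma aux_deriv_limit_zero (g : ℝ → ℝ) (T ℓ d : ℝ)
    (hg : ∀ t < T, DifferentiableAt ℝ g t)
    (hgl : Tendsto g atBot (nhds ℓ))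
    (hd : Tendsto (deriv g) atBot (nhds d)) : d = 0 := by
  have key : Tendsto (fun t => g t - g (t - 1)) atBot (nhds d) := by
    rw [tendsto_def]
    intro U hU
    have h1 : ∀ᶠ s in atBot, deriv g s ∈ U := hd hU
    rw [eventually_atBot] at h1
    obtain ⟨T', hT'⟩ := h1
    filter_upwards [eventually_lt_atBot T, eventually_le_atBot T'] with t htT htT'
    have hlt : t - 1 < t := by linarith
    have hcont : ContinuousOn g (Set.Icc (t - 1) t) := fun s hs =>
      (hg s (lt_of_le_of_lt hs.2 htT)).continuousAt.continuousWithinAt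
    have hdiff : DifferentiableOn ℝ g (Set.Ioo (t - 1) t) := fun s hs =>
      (hg s (lt_trans hs.2 htT)).differentiableWithinAt
    obtain ⟨ξ, hξ, hder⟩ := exists_deriv_eq_slope g hlt hcont hdiff
    have heq : deriv g ξ = g t - g (t - 1) := by
      rw [hder]
      have : t - (t - 1) = 1 := by ring
      rw [this, div_one]
    show g t - g (t - 1) ∈ U
    rw [← heq]
    exact hT' ξ (le_trans hξ.2.le htT')
  have key2 : Tendsto (fun t => g t - g (t - 1)) atBot (nhds 0) := by
    have hcomp : Tendsto (fun t : ℝ => g (t - 1)) atBot (nhds ℓ) :=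
      hgl.comp (tendsto_atBot_add_const_right atBot (-1) tendsto_id)
    simpa using hgl.sub hcomp
  exact tendsto_nhds_unique key key2

theorem hubble_derivative_limit_zero
    (a : ℝ → ℝ) (tmax HΛ c : ℝ) (hHΛ : 0 < HΛ)
    (ha_diff : ∀ t ∈ Set.Iio tmax, DifferentiableAt ℝ a t)
    (ha_diff2 : ∀ t ∈ Set.Iio tmax, DifferentiableAt ℝ (deriv a) t)
    (ha_pos : ∀ t ∈ Set.Iio tmax, 0 < a t)
    (hH : Tendsto (fun t => deriv a t / a t) atBot (nhds HΛ))
    (hHdot : Tendsto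
      (fun t => deriv (deriv a) t / a t - (deriv a t / a t) ^ 2)
      atBot (nhds c)) :
    c = 0 := by
  -- eventually deriv a > 0
  have hev : ∀ᶠ t in atBot, 0 < deriv a t / a t := hH.eventually_const_lt hHΛ
  have hevt : ∀ᶠ t in atBot, t < tmax := eventually_lt_atBot tmax
  obtain ⟨T₁, hT₁⟩ := eventually_atBot.mp (hev.and hevt)
  set T : ℝ := min T₁ tmax with hT
  have hTprop : ∀ t < T, t < tmax ∧ 0 < a t ∧ 0 < deriv a t := by
    intro t ht
    have h1 : t ≤ T₁ := le_of_lt (lt_of_lt_of_le ht (min_le_left _ _))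
    obtain ⟨hpos, htm⟩ := hT₁ t h1
    have hat : 0 < a t := ha_pos t htm
    refine ⟨htm, hat, ?_⟩
    have := mul_pos hpos hat
    rwa [div_mul_cancel₀ _ hat.ne'] at this
  set g : ℝ → ℝ := fun t => Real.log (deriv a t) - Real.log (a t) with hg
  have hgdiff : ∀ t < T, DifferentiableAt ℝ g t := by
    intro t ht
    obtain ⟨htm, hat, hft⟩ := hTprop t ht
    exact ((ha_diff2 t htm).log hft.ne').sub ((ha_diff t htm).log hat.ne')
  -- g tends to log HΛ
  have hgl : Tendsto g atBot (nhds (Real.log HΛ)) := by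
    have h1 : Tendsto (fun t => Real.log (deriv a t / a t)) atBot (nhds (Real.log HΛ)) :=
      (Real.continuousAt_log hHΛ.ne').tendsto.comp hH
    apply h1.congr'
    filter_upwards [eventually_le_atBot (T - 1)] with t ht
    obtain ⟨_, hat, hft⟩ := hTprop t (by linarith [min_le_left T₁ tmax])
    exact Real.log_div hft.ne' hat.ne'
  -- deriv g tends to c / HΛ
  have hdg : ∀ t < T, deriv g t = deriv (deriv a) t / deriv a t - deriv a t / a t := by
    intro t ht
    obtain ⟨htm, hat, hft⟩ := hTprop t ht
    have h1 : HasDerivAt (fun s => Real.log (deriv a s))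
        (deriv (deriv a) t / deriv a t) t :=
      (ha_diff2 t htm).hasDerivAt.log hft.ne'
    have h2 : HasDerivAt (fun s => Real.log (a s)) (deriv a t / a t) t :=
      (ha_diff t htm).hasDerivAt.log hat.ne'
    exact (h1.sub h2).deriv
  have hlim1 : Tendsto (fun t => deriv (deriv a) t / a t) atBot (nhds (c + HΛ ^ 2)) := by
    have := hHdot.add ((hH.pow 2))
    simpa using this
  have hlim2 : Tendsto (fun t => (deriv a t / a t)⁻¹) atBot (nhds HΛ⁻¹) :=
    hH.inv₀ hHΛ.ne'
  have hlim3 : Tendsto (fun t => deriv (deriv a) t / deriv a t) atBot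
      (nhds ((c + HΛ ^ 2) * HΛ⁻¹)) := by
    apply (hlim1.mul hlim2).congr'
    filter_upwards [eventually_le_atBot (T - 1)] with t ht
    obtain ⟨_, hat, hft⟩ := hTprop t (by linarith)
    field_simp
  have hdgl : Tendsto (deriv g) atBot (nhds (c / HΛ)) := by
    have h4 : Tendsto (fun t => deriv (deriv a) t / deriv a t - deriv a t / a t)
        atBot (nhds ((c + HΛ ^ 2) * HΛ⁻¹ - HΛ)) := hlim3.sub hH
    have hval : (c + HΛ ^ 2) * HΛ⁻¹ - HΛ = c / HΛ := by
      field_simp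
      ring
    rw [hval] at h4
    apply h4.congr'
    filter_upwards [eventually_le_atBot (T - 1)] with t ht
    exact (hdg t (by linarith)).symm
  have := aux_deriv_limit_zero g T (Real.log HΛ) (c / HΛ) hgdiff hgl hdgl
  field_simp at this
  simpa using this
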